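/- (Expected Hamming distance of rounding.) Let x be a probability-vector assignment on vertices V, x̄ an integral labeling, ε ∈ (0, 1/k), and x' = ε x + (1-ε) x̄ (per-vertex convex combination). Under the ε-close rounding with shared randomness, the expected number of vertices where the rounded labeling h differs from x̄ satisfies E[∑_{u∈V} 1[h(u) ≠ x̄(u)]] = ε ∑_{u∈V} (1/2)‖x_u - x̄_u‖₁. -/

import Mathlib

open MeasureTheory

theorem rounding_expected_hamming {V : Type*} [Fintype V] (k : ℕ) [NeZero k]
    (x : V → Fin k → ℝ) (xbar : V → Fin k) (ε : ℝ)
    (hε0 : 0 < ε) (hε1 : ε < 1 / k)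
    (hx : ∀ u i, 0 ≤ x u i) (hxs : ∀ u, ∑ i, x u i = 1)
    (x' : V → Fin k → ℝ)
    (hx' : ∀ u i, x' u i = ε * x u i + (1 - ε) * (if i = xbar u then 1 else 0)) :
    ∫ p : Fin k × ℝ,
        (∑ u, if (if x' u p.1 > p.2 then p.1 else xbar u) ≠ xbar u then (1 : ℝ) else 0)
      ∂((PMF.uniformOfFintype (Fin k)).toMeasure.prod
          ((k : ENNReal) • volume.restrict (Set.Ioo (0 : ℝ) (1 / k))))
      = ε * ∑ u, (1 / 2) * ∑ i, |x u i - (if i = xbar u then (1 : ℝ) else 0)| := by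
  classical
  have hk0 : (0:ℝ) < k := Nat.cast_pos.mpr (NeZero.pos k)
  set ν : Measure ℝ := (k : ENNReal) • volume.restrict (Set.Ioo (0 : ℝ) (1 / k)) with hν
  have hνfin : IsFiniteMeasure ν := by
    constructor
    rw [hν]
    simp only [Measure.smul_apply, smul_eq_mul, Measure.restrict_apply MeasurableSet.univ,
      Set.univ_inter, Real.volume_Ioo]
    exact (ENNReal.mul_lt_top (by simp) (by simp)).ne.lt_top
  have hxle : ∀ u i, x u i ≤ 1 := by
    intro u i
    calc x u i ≤ ∑ j, x u j :=
          Finset.single_le_sum (fun j _ => hx u j) (Finset.mem_univ i)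
      _ = 1 := hxs u
  -- bounds on x' off the diagonal
  have hc0 : ∀ u i, 0 ≤ ε * x u i := fun u i => mul_nonneg hε0.le (hx u i)
  have hc1 : ∀ u i, ε * x u i ≤ 1 / k := fun u i =>
    le_of_lt (lt_of_le_of_lt (by nlinarith [hx u i, hxle u i, hε0]) hε1)
  -- rewrite the integrand
  have hiff : ∀ u (p : Fin k × ℝ),
      (if (if x' u p.1 > p.2 then p.1 else xbar u) ≠ xbar u then (1:ℝ) else 0)
        = if p.1 ≠ xbar u ∧ p.2 < x' u p.1 then 1 else 0 := by
    intro u p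
    by_cases h : x' u p.1 > p.2 <;> by_cases h2 : p.1 = xbar u <;> simp [h, h2]
  have hmeas : ∀ u, MeasurableSet {p : Fin k × ℝ | p.1 ≠ xbar u ∧ p.2 < x' u p.1} := by
    intro u
    exact (measurable_fst (measurableSet_singleton (xbar u)).compl).inter
      (measurableSet_lt measurable_snd ((measurable_from_top (f := x' u)).comp measurable_fst))
  have hint : ∀ u, Integrable (fun p : Fin k × ℝ =>
      if p.1 ≠ xbar u ∧ p.2 < x' u p.1 then (1:ℝ) else 0)
      ((PMF.uniformOfFintype (Fin k)).toMeasure.prod ν) := by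
    intro u
    have : (fun p : Fin k × ℝ => if p.1 ≠ xbar u ∧ p.2 < x' u p.1 then (1:ℝ) else 0)
        = Set.indicator {p : Fin k × ℝ | p.1 ≠ xbar u ∧ p.2 < x' u p.1} (fun _ => 1) := by
      funext p; simp [Set.indicator_apply]
    rw [this]
    exact (integrable_const 1).indicator (hmeas u)
  simp only [hiff]
  rw [integral_finset_sum Finset.univ (fun u _ => hint u)]
  -- compute each term
  have key : ∀ u, (∫ p : Fin k × ℝ,
      (if p.1 ≠ xbar u ∧ p.2 < x' u p.1 then (1:ℝ) else 0)
      ∂((PMF.uniformOfFintype (Fin k)).toMeasure.prod ν))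
      = ε * (1 - x u (xbar u)) := by
    intro u
    rw [MeasureTheory.integral_prod _ (hint u)]
    rw [PMF.integral_eq_sum]
    have inner : ∀ i : Fin k, (∫ r : ℝ, (if i ≠ xbar u ∧ r < x' u i then (1:ℝ) else 0) ∂ν)
        = if i = xbar u then 0 else (k : ℝ) * (ε * x u i) := by
      intro i
      by_cases hi : i = xbar u
      · simp [hi]
      · simp only [hi, if_false]
        have hxv : x' u i = ε * x u i := by simp [hx' u i, hi]
        have : (fun r : ℝ => if i ≠ xbar u ∧ r < x' u i then (1:ℝ) else 0)
            = Set.indicator (Set.Iio (x' u i)) (1 : ℝ → ℝ) := by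
          funext r; simp [Set.indicator_apply, hi]
        rw [this, MeasureTheory.integral_indicator_one measurableSet_Iio]
        rw [hν]
        simp only [measureReal_def, Measure.smul_apply, smul_eq_mul,
          Measure.restrict_apply measurableSet_Iio]
        have hset : Set.Iio (x' u i) ∩ Set.Ioo (0:ℝ) (1 / k) = Set.Ioo 0 (ε * x u i) := by
          rw [hxv]
          ext r
          simp only [Set.mem_inter_iff, Set.mem_Iio, Set.mem_Ioo]
          constructor
          · rintro ⟨h1, h2, h3⟩; exact ⟨h2, h1⟩
          · rintro ⟨h1, h2⟩; exact ⟨h2, h1, lt_of_lt_of_le h2 (hc1 u i)⟩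
        rw [hset, Real.volume_Ioo, sub_zero]
        rw [ENNReal.toReal_mul, ENNReal.toReal_ofReal (hc0 u i)]
        simp
    simp only [inner]
    have hq : ∀ i : Fin k, ((PMF.uniformOfFintype (Fin k)) i).toReal = (k:ℝ)⁻¹ := by
      intro i
      simp [PMF.uniformOfFintype_apply]
    simp only [hq, smul_eq_mul]
    have : ∀ i : Fin k, (k:ℝ)⁻¹ * (if i = xbar u then 0 else (k : ℝ) * (ε * x u i))
        = ε * x u i - (if i = xbar u then ε * x u i else 0) := by
      intro i
      by_cases hi : i = xbar u
      · simp [hi]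
      · rw [if_neg hi, if_neg hi, sub_zero, ← mul_assoc, inv_mul_cancel₀ hk0.ne', one_mul]
    simp only [this]
    rw [Finset.sum_sub_distrib, Finset.sum_ite_eq' Finset.univ (xbar u) (fun i => ε * x u i)]
    simp only [Finset.mem_univ, if_true, ← Finset.mul_sum, hxs u]
    ring
  simp only [key]
  -- compute the right-hand side
  have rhs : ∀ u, ∑ i, |x u i - (if i = xbar u then (1 : ℝ) else 0)|
      = 2 * (1 - x u (xbar u)) := by
    intro u
    have : ∀ i : Fin k, |x u i - (if i = xbar u then (1 : ℝ) else 0)|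
        = x u i + (if i = xbar u then 1 - 2 * x u i else 0) := by
      intro i
      by_cases hi : i = xbar u
      · simp only [hi, if_true]
        rw [abs_of_nonpos (by linarith [hxle u (xbar u)])]
        ring
      · simp only [hi, if_false]
        rw [sub_zero, abs_of_nonneg (hx u i), add_zero]
    simp only [this]
    rw [Finset.sum_add_distrib, hxs u,
      Finset.sum_ite_eq' Finset.univ (xbar u) (fun i => 1 - 2 * x u i)]
    simp only [Finset.mem_univ, if_true]
    ring
  simp only [rhs]
  rw [Finset.mul_sum]
  congr 1
  funext u
  ring
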